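/- For integers q ≥ 3, with s_2 = 2π/(2q-1), one has W_q(s_2) = (4/π)∫_0^{2π} sin(t)/((2q-1)·sin(t/(2q-1))) dt ≥ (4/π)·Si(π) + (4/π)∫_π^{2π} sin(t)/(5·sin(t/5)) dt, where Si(π) = ∫_0^π (sin t)/t dt. In particular W_q(s_2) ≥ 1.7. -/

import Mathlib

open Real Set MeasureTheory intervalIntegral

-- concavity chord lemma
lemma my_chord {x y : ℝ} (hx : 0 ≤ x) (hxy : x ≤ y) (hy : y ≤ π) :
    x * Real.sin y ≤ y * Real.sin x := by
  rcases eq_or_lt_of_le (hx.trans hxy) with h | hypos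
  · have hx0 : x = 0 := le_antisymm (by linarith [hxy, h]) hx
    have hy0 : y = 0 := by linarith
    simp [hx0, hy0]
  · have h0 : (0:ℝ) ∈ Icc 0 π := ⟨le_refl _, pi_pos.le⟩
    have hym : y ∈ Icc 0 π := ⟨hypos.le, hy⟩
    have ha : 0 ≤ x / y := div_nonneg hx hypos.le
    have hb : 0 ≤ 1 - x / y := by
      have : x / y ≤ 1 := (div_le_one hypos).2 hxy
      linarith
    have := (strictConcaveOn_sin_Icc.concaveOn).2 hym h0 ha hb (by ring)
    simp only [smul_eq_mul, Real.sin_zero, mul_zero, add_zero] at this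
    rw [div_mul_cancel₀ _ (ne_of_gt hypos)] at this
    have := mul_le_mul_of_nonneg_left this hypos.le
    calc x * Real.sin y = y * (x / y * Real.sin y) := by field_simp
    _ ≤ y * Real.sin x := by nlinarith [this]


lemma my_nonneg_of_deriv {f f' : ℝ → ℝ} (hd : ∀ x, HasDerivAt f (f' x) x)
    (h0 : f 0 = 0) (h' : ∀ x, 0 ≤ x → 0 ≤ f' x) {x : ℝ} (hx : 0 ≤ x) : 0 ≤ f x := by
  have hm : MonotoneOn f (Ici 0) := by
    apply monotoneOn_of_deriv_nonneg (convex_Ici 0)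
    · exact fun y _ => ((hd y).differentiableAt.continuousAt).continuousWithinAt
    · intro y hy
      exact (hd y).differentiableAt.differentiableWithinAt
    · intro y hy
      rw [interior_Ici] at hy
      rw [(hd y).deriv]
      exact h' y (le_of_lt hy)
  calc (0:ℝ) = f 0 := h0.symm
  _ ≤ f x := hm Set.self_mem_Ici hx hx

lemma my_sin_ge1 {x : ℝ} (hx : 0 ≤ x) : x - x^3/6 ≤ Real.sin x := by
  have h := my_nonneg_of_deriv (f := fun x => Real.sin x - (x - x^3/6))
    (f' := fun x => Real.cos x - (1 - x^2/2)) (fun y => by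
      have := (Real.hasDerivAt_sin y).sub (((hasDerivAt_id y).sub ((hasDerivAt_pow 3 y).div_const 6)))
      refine this.congr_deriv ?_
      simp; ring)
    (by simp) (fun y _ => by linarith [Real.one_sub_sq_div_two_le_cos (x := y)]) hx
  linarith [h]

lemma my_cos_le2 {x : ℝ} (hx : 0 ≤ x) : Real.cos x ≤ 1 - x^2/2 + x^4/24 := by
  have h := my_nonneg_of_deriv (f := fun x => (1 - x^2/2 + x^4/24) - Real.cos x)
    (f' := fun x => Real.sin x - (x - x^3/6)) (fun y => by
      have := ((((hasDerivAt_const y (1:ℝ)).sub ((hasDerivAt_pow 2 y).div_const 2)).add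
        ((hasDerivAt_pow 4 y).div_const 24)).sub (Real.hasDerivAt_cos y))
      refine this.congr_deriv ?_
      simp; ring)
    (by simp) (fun y hy => by linarith [my_sin_ge1 hy]) hx
  linarith [h]

lemma my_sin_le3 {x : ℝ} (hx : 0 ≤ x) : Real.sin x ≤ x - x^3/6 + x^5/120 := by
  have h := my_nonneg_of_deriv (f := fun x => (x - x^3/6 + x^5/120) - Real.sin x)
    (f' := fun x => (1 - x^2/2 + x^4/24) - Real.cos x) (fun y => by
      have := ((((hasDerivAt_id y).sub ((hasDerivAt_pow 3 y).div_const 6)).add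
        ((hasDerivAt_pow 5 y).div_const 120)).sub (Real.hasDerivAt_sin y))
      refine this.congr_deriv ?_
      simp; ring)
    (by simp) (fun y hy => by linarith [my_cos_le2 hy]) hx
  linarith [h]

lemma my_cos_ge4 {x : ℝ} (hx : 0 ≤ x) : 1 - x^2/2 + x^4/24 - x^6/720 ≤ Real.cos x := by
  have h := my_nonneg_of_deriv (f := fun x => Real.cos x - (1 - x^2/2 + x^4/24 - x^6/720))
    (f' := fun x => (x - x^3/6 + x^5/120) - Real.sin x) (fun y => by
      have := (Real.hasDerivAt_cos y).sub ((((hasDerivAt_const y (1:ℝ)).sub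
        ((hasDerivAt_pow 2 y).div_const 2)).add ((hasDerivAt_pow 4 y).div_const 24)).sub
        ((hasDerivAt_pow 6 y).div_const 720))
      refine this.congr_deriv ?_
      simp; ring)
    (by simp) (fun y hy => by linarith [my_sin_le3 hy]) hx
  linarith [h]

lemma my_sin_ge5 {x : ℝ} (hx : 0 ≤ x) : x - x^3/6 + x^5/120 - x^7/5040 ≤ Real.sin x := by
  have h := my_nonneg_of_deriv (f := fun x => Real.sin x - (x - x^3/6 + x^5/120 - x^7/5040))
    (f' := fun x => Real.cos x - (1 - x^2/2 + x^4/24 - x^6/720)) (fun y => by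
      have := (Real.hasDerivAt_sin y).sub ((((hasDerivAt_id y).sub
        ((hasDerivAt_pow 3 y).div_const 6)).add ((hasDerivAt_pow 5 y).div_const 120)).sub
        ((hasDerivAt_pow 7 y).div_const 5040))
      refine this.congr_deriv ?_
      simp; ring)
    (by simp) (fun y hy => by linarith [my_cos_ge4 hy]) hx
  linarith [h]



lemma my_denom_mono {a b t : ℝ} (ha : 0 < a) (hab : a ≤ b) (ht : 0 ≤ t) (hta : t / a ≤ π) :
    a * Real.sin (t / a) ≤ b * Real.sin (t / b) := by
  have hb : 0 < b := lt_of_lt_of_le ha hab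
  rcases eq_or_lt_of_le ht with h0 | htpos
  · simp [← h0]
  have hx : 0 ≤ t / b := by positivity
  have hxy : t / b ≤ t / a := by gcongr
  have hch := my_chord hx hxy hta
  rw [div_mul_eq_mul_div, div_mul_eq_mul_div, div_le_div_iff₀ hb ha] at hch
  nlinarith [hch, htpos]

-- integrability of sin t / t on [0, π]
lemma my_ii1 : IntervalIntegrable (fun t => Real.sin t / t) volume 0 π := by
  rw [intervalIntegrable_iff]
  apply Measure.integrableOn_of_bounded (M := 1)
  · exact (measure_Ioc_lt_top).ne
  · exact (Real.measurable_sin.div measurable_id).aestronglyMeasurable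
  · refine MeasureTheory.ae_of_all _ (fun t => ?_)
    rw [Real.norm_eq_abs, abs_div]
    rcases eq_or_ne t 0 with h | h
    · simp [h]
    · rw [div_le_one (abs_pos.2 h)]
      exact Real.abs_sin_le_abs

-- integrability of sin t / (a * sin (t/a)) on [0, π]
lemma my_ii2 {a : ℝ} (ha : 5 ≤ a) :
    IntervalIntegrable (fun t => Real.sin t / (a * Real.sin (t / a))) volume 0 π := by
  have ha0 : (0:ℝ) < a := by linarith
  rw [intervalIntegrable_iff, uIoc_of_le pi_pos.le]
  apply Measure.integrableOn_of_bounded (M := 2)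
  · exact (measure_Ioc_lt_top).ne
  · exact (Real.measurable_sin.div ((measurable_const).mul
      (Real.measurable_sin.comp (measurable_id.div_const a)))).aestronglyMeasurable
  · have hae := MeasureTheory.ae_restrict_mem (μ := volume) (measurableSet_Ioc (a := (0:ℝ)) (b := π))
    filter_upwards [hae] with t ht
    obtain ⟨ht0, htπ⟩ := ht
    have hu0 : 0 < t / a := by positivity
    have hu1 : t / a ≤ 1 := by
      rw [div_le_one ha0]
      linarith [Real.pi_le_four]
    have hs : t / a / 2 ≤ Real.sin (t / a) := by
      have h1 := my_sin_ge1 hu0.le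
      have h2 : (t/a)^2 ≤ t/a := by nlinarith [hu0, hu1]
      have h3 : (t/a)^3 ≤ t/a := by nlinarith [hu0, hu1, h2]
      nlinarith [h1, h3, hu0]
    have hden : t / 2 ≤ a * Real.sin (t / a) := by
      have := mul_le_mul_of_nonneg_left hs ha0.le
      calc t / 2 = a * (t / a / 2) := by field_simp
      _ ≤ a * Real.sin (t / a) := this
    have hdp : 0 < a * Real.sin (t / a) := lt_of_lt_of_le (by positivity) hden
    rw [Real.norm_eq_abs, abs_div, abs_of_pos hdp, div_le_iff₀ hdp]
    have hnum : |Real.sin t| ≤ t := le_trans Real.abs_sin_le_abs (le_of_eq (abs_of_pos ht0))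
    nlinarith [hnum, hden]

-- integrability via continuity on [π, 2π]
lemma my_ii3 {a : ℝ} (ha : 5 ≤ a) :
    IntervalIntegrable (fun t => Real.sin t / (a * Real.sin (t / a))) volume π (2 * π) := by
  have ha0 : (0:ℝ) < a := by linarith
  apply ContinuousOn.intervalIntegrable
  apply ContinuousOn.div
  · exact Real.continuous_sin.continuousOn
  · exact (continuous_const.mul (Real.continuous_sin.comp (continuous_id.div_const a))).continuousOn
  · intro t ht
    rw [uIcc_of_le (by linarith [pi_pos] : π ≤ 2 * π)] at ht
    obtain ⟨ht1, ht2⟩ := ht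
    have htpos : 0 < t := lt_of_lt_of_le pi_pos ht1
    have h1 : 0 < t / a := by positivity
    have h2 : t / a < π := by
      rw [div_lt_iff₀ ha0]
      nlinarith [pi_pos]
    have : 0 < Real.sin (t / a) := Real.sin_pos_of_pos_of_lt_pi h1 h2
    positivity


lemma my_sin5 (x : ℝ) : Real.sin (5 * x) =
    Real.sin x * (1 + 2 * Real.cos (2 * x) + 2 * Real.cos (4 * x)) := by
  have e5 : (5:ℝ) * x = x + x + x + x + x := by ring
  have e4 : (4:ℝ) * x = x + x + x + x := by ring
  have e2 : (2:ℝ) * x = x + x := by ring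
  rw [e5, e4, e2]
  simp only [Real.sin_add, Real.cos_add]
  linear_combination (Real.sin x * (3 * Real.cos x ^ 2 + 1 - Real.sin x ^ 2)) * (Real.sin_sq_add_cos_sq x)

lemma my_I2 : (∫ t in π..(2*π), Real.sin t / (5 * Real.sin (t/5)))
    = π/5 + Real.sin (π/5)/2 - 3/2 * Real.sin (2*π/5) := by
  have h1 : (∫ t in π..(2*π), Real.sin t / (5 * Real.sin (t/5)))
      = ∫ t in π..(2*π), (fun x => Real.sin (5*x) / (5 * Real.sin x)) (t/5) := by
    apply integral_congr
    intro t _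
    simp only
    rw [show 5*(t/5) = t by ring]
  rw [h1, integral_comp_div (c := 5) (f := fun x => Real.sin (5*x) / (5 * Real.sin x)) (by norm_num)]
  have h2 : ((5:ℝ) • ∫ x in (π/5)..((2*π)/5), Real.sin (5*x) / (5 * Real.sin x))
      = ∫ x in (π/5)..((2*π)/5), (1 + 2 * Real.cos (2*x) + 2 * Real.cos (4*x)) := by
    rw [← intervalIntegral.integral_smul]
    apply integral_congr
    intro x hx
    rw [uIcc_of_le (by linarith [pi_pos] : π/5 ≤ (2*π)/5)] at hx
    obtain ⟨hx1, hx2⟩ := hx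
    have hxpos : 0 < x := lt_of_lt_of_le (by positivity) hx1
    have hxlt : x < π := lt_of_le_of_lt hx2 (by linarith [pi_pos])
    have hs : Real.sin x ≠ 0 := ne_of_gt (Real.sin_pos_of_pos_of_lt_pi hxpos hxlt)
    simp only [smul_eq_mul]
    rw [my_sin5 x]
    field_simp
  rw [h2]
  have h3 : (∫ x in (π/5)..((2*π)/5), (1 + 2 * Real.cos (2*x) + 2 * Real.cos (4*x)))
      = ((2*π)/5 + Real.sin (2*((2*π)/5)) + Real.sin (4*((2*π)/5))/2)
        - (π/5 + Real.sin (2*(π/5)) + Real.sin (4*(π/5))/2) := by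
    apply integral_eq_sub_of_hasDerivAt (f := fun x => x + Real.sin (2*x) + Real.sin (4*x)/2)
    · intro x _
      have d1 : HasDerivAt (fun x : ℝ => Real.sin (2*x)) (Real.cos (2*x) * 2) x :=
        (Real.hasDerivAt_sin (2*x)).comp x (by simpa using (hasDerivAt_id x).const_mul (2:ℝ))
      have d2 : HasDerivAt (fun x : ℝ => Real.sin (4*x)) (Real.cos (4*x) * 4) x :=
        (Real.hasDerivAt_sin (4*x)).comp x (by simpa using (hasDerivAt_id x).const_mul (4:ℝ))
      have := ((hasDerivAt_id x).add d1).add (d2.div_const 2)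
      refine this.congr_deriv ?_
      ring
    · apply Continuous.intervalIntegrable
      fun_prop
  rw [h3, show 2*((2*π)/5) = π - π/5 by ring, show 4*((2*π)/5) = -(2*π/5) + 2*π by ring,
    show (2:ℝ)*(π/5) = 2*π/5 by ring, show (4:ℝ)*(π/5) = π - π/5 by ring,
    Real.sin_pi_sub, Real.sin_add_two_pi, Real.sin_neg]
  ring



lemma my_chg {c : ℝ} (hc : 5 ≤ c) :
    (∫ s in (0:ℝ)..(2*π/c), Real.sin (c*s) / Real.sin s)
      = ∫ t in (0:ℝ)..(2*π), Real.sin t / (c * Real.sin (t/c)) := by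
  have hc0 : c ≠ 0 := by intro h; rw [h] at hc; norm_num at hc
  have h1 : (∫ t in (0:ℝ)..(2*π), Real.sin t / (c * Real.sin (t/c)))
      = ∫ t in (0:ℝ)..(2*π), (fun x => Real.sin (c*x) / (c * Real.sin x)) (t/c) := by
    apply integral_congr
    intro t _
    simp only
    rw [mul_div_cancel₀ t hc0]
  have h2 := integral_comp_div (a := (0:ℝ)) (b := 2*π) (c := c)
    (f := fun x => Real.sin (c*x) / (c * Real.sin x)) hc0
  rw [h1, h2, zero_div, ← intervalIntegral.integral_smul]
  apply integral_congr
  intro x _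
  simp only [smul_eq_mul]
  rw [mul_div_assoc', mul_div_mul_left _ _ hc0]

lemma my_Si : π - π^3/18 + π^5/600 - π^7/35280 ≤ ∫ t in (0:ℝ)..π, Real.sin t / t := by
  have hP : (∫ t in (0:ℝ)..π, (1 - t^2/6 + t^4/120 - t^6/5040))
      = π - π^3/18 + π^5/600 - π^7/35280 := by
    have := integral_eq_sub_of_hasDerivAt
      (f := fun t : ℝ => t - t^3/18 + t^5/600 - t^7/35280)
      (f' := fun t : ℝ => 1 - t^2/6 + t^4/120 - t^6/5040)
      (a := (0:ℝ)) (b := π)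
      (fun x _ => by
        have := (((hasDerivAt_id x).sub ((hasDerivAt_pow 3 x).div_const 18)).add
          ((hasDerivAt_pow 5 x).div_const 600)).sub ((hasDerivAt_pow 7 x).div_const 35280)
        refine this.congr_deriv ?_
        simp; ring)
      (by apply Continuous.intervalIntegrable; fun_prop)
    rw [this]; norm_num
  rw [← hP]
  apply integral_mono_ae_restrict pi_pos.le
    (by apply Continuous.intervalIntegrable; fun_prop) my_ii1
  have h0 : ∀ᵐ (t : ℝ) ∂(volume.restrict (Icc (0:ℝ) π)), t ≠ 0 := by
    apply ae_restrict_of_ae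
    rw [MeasureTheory.ae_iff]
    have : {t : ℝ | ¬ t ≠ 0} = {(0:ℝ)} := by ext t; simp
    rw [this]
    exact Real.volume_singleton
  have hmem := MeasureTheory.ae_restrict_mem (μ := volume) (measurableSet_Icc (a := (0:ℝ)) (b := π))
  filter_upwards [h0, hmem] with t ht htm
  have htpos : 0 < t := lt_of_le_of_ne htm.1 (Ne.symm ht)
  rw [le_div_iff₀ htpos]
  nlinarith [my_sin_ge5 htpos.le]

lemma my_num : 1.7 * (π/4) ≤ (π - π^3/18 + π^5/600 - π^7/35280)
    + (π/5 + Real.sin (π/5)/2 - 3/2 * Real.sin (2*π/5)) := by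
  have hs1 : π/5 - (π/5)^3/6 ≤ Real.sin (π/5) := my_sin_ge1 (by positivity)
  have hs2 : Real.sin (2*π/5) ≤ 2*π/5 - (2*π/5)^3/6 + (2*π/5)^5/120 :=
    my_sin_le3 (by positivity)
  have hl : 3.141592 < π := pi_gt_d6
  have hu : π < 3.141593 := pi_lt_d6
  have h2l : 9.8696002 < π^2 := by nlinarith
  have h2u : π^2 < 9.8696066 := by nlinarith
  have h3l : 31.006257 < π^3 := by nlinarith [h2l, h2u]
  have h3u : π^3 < 31.006287 := by nlinarith [h2l, h2u]
  have h5l : 306.019366 < π^5 := by nlinarith [h2l, h2u, h3l, h3u]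
  have h5u : π^5 < 306.019854 := by nlinarith [h2l, h2u, h3l, h3u]
  have h7l : 3020.288829 < π^7 := by nlinarith [h2l, h2u, h5l, h5u]
  have h7u : π^7 < 3020.295560 := by nlinarith [h2l, h2u, h5l, h5u]
  nlinarith [hs1, hs2, hl, hu, h3l, h3u, h5l, h5u, h7l, h7u]

theorem stmt_10 (q : ℕ) (hq : 3 ≤ q)
    (s₂ : ℝ) (hs₂ : s₂ = 2 * π / (2 * (q : ℝ) - 1))
    (Wq : ℝ)
    (hWq : Wq = (4 / π) * ∫ s in (0 : ℝ)..s₂, Real.sin ((2 * (q : ℝ) - 1) * s) / Real.sin s) :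
    Wq = (4 / π) * ∫ t in (0 : ℝ)..(2 * π),
        Real.sin t / ((2 * (q : ℝ) - 1) * Real.sin (t / (2 * (q : ℝ) - 1))) ∧
    (4 / π) * (∫ t in (0 : ℝ)..π, Real.sin t / t) +
      (4 / π) * (∫ t in π..(2 * π), Real.sin t / (5 * Real.sin (t / 5))) ≤ Wq ∧
    (1.7 : ℝ) ≤ Wq := by
  have hq3 : (3:ℝ) ≤ (q:ℝ) := by exact_mod_cast hq
  set c : ℝ := 2 * (q:ℝ) - 1 with hcdef
  have hc : (5:ℝ) ≤ c := by simp only [hcdef]; linarith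
  have hc0 : (0:ℝ) < c := by linarith
  have heq : (∫ s in (0:ℝ)..s₂, Real.sin (c * s) / Real.sin s)
      = ∫ t in (0:ℝ)..(2*π), Real.sin t / (c * Real.sin (t/c)) := by
    rw [hs₂]
    exact my_chg hc
  have hWq2 : Wq = (4 / π) * ∫ t in (0:ℝ)..(2*π), Real.sin t / (c * Real.sin (t/c)) := by
    rw [hWq, heq]
  -- pointwise comparison on [0, π]
  have ptw1 : ∀ t ∈ Icc (0:ℝ) π, Real.sin t / t ≤ Real.sin t / (c * Real.sin (t/c)) := by
    intro t ht
    obtain ⟨ht0, htπ⟩ := ht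
    rcases eq_or_lt_of_le ht0 with h0 | htpos
    · simp [← h0]
    · have hnum : 0 ≤ Real.sin t := Real.sin_nonneg_of_nonneg_of_le_pi htpos.le htπ
      have hulow : 0 < t / c := by positivity
      have huup : t / c < π := by
        rw [div_lt_iff₀ hc0]
        nlinarith [pi_pos]
      have hdpos : 0 < c * Real.sin (t/c) :=
        mul_pos hc0 (Real.sin_pos_of_pos_of_lt_pi hulow huup)
      have hdle : c * Real.sin (t/c) ≤ t := by
        have := Real.sin_le hulow.le
        calc c * Real.sin (t/c) ≤ c * (t/c) := by nlinarith [this]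
        _ = t := by field_simp
      exact div_le_div_of_nonneg_left hnum hdpos hdle
  -- pointwise comparison on [π, 2π]
  have ptw2 : ∀ t ∈ Icc π (2*π),
      Real.sin t / (5 * Real.sin (t/5)) ≤ Real.sin t / (c * Real.sin (t/c)) := by
    intro t ht
    obtain ⟨ht1, ht2⟩ := ht
    have htpos : 0 < t := lt_of_lt_of_le pi_pos ht1
    have hsin : Real.sin t ≤ 0 := by
      have h := Real.sin_nonneg_of_nonneg_of_le_pi (x := t - π) (by linarith) (by linarith)
      rw [Real.sin_sub_pi] at h
      linarith
    have hd5pos : 0 < 5 * Real.sin (t/5) := by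
      have h1 : 0 < t / 5 := by positivity
      have h2 : t / 5 < π := by
        rw [div_lt_iff₀ (by norm_num : (0:ℝ) < 5)]
        nlinarith [pi_pos]
      have := Real.sin_pos_of_pos_of_lt_pi h1 h2
      positivity
    have hdmono : 5 * Real.sin (t/5) ≤ c * Real.sin (t/c) := by
      apply my_denom_mono (by norm_num) hc htpos.le
      rw [div_le_iff₀ (by norm_num : (0:ℝ) < 5)]
      nlinarith [pi_pos]
    rw [div_eq_mul_inv, div_eq_mul_inv]
    have hinv : (c * Real.sin (t/c))⁻¹ ≤ (5 * Real.sin (t/5))⁻¹ :=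
      inv_anti₀ hd5pos hdmono
    exact mul_le_mul_of_nonpos_left hinv hsin
  have hsplit : (∫ t in (0:ℝ)..(2*π), Real.sin t / (c * Real.sin (t/c)))
      = (∫ t in (0:ℝ)..π, Real.sin t / (c * Real.sin (t/c)))
        + ∫ t in π..(2*π), Real.sin t / (c * Real.sin (t/c)) :=
    (integral_add_adjacent_intervals (my_ii2 hc) (my_ii3 hc)).symm
  have mono1 : (∫ t in (0:ℝ)..π, Real.sin t / t)
      ≤ ∫ t in (0:ℝ)..π, Real.sin t / (c * Real.sin (t/c)) :=
    integral_mono_on pi_pos.le my_ii1 (my_ii2 hc) ptw1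
  have mono2 : (∫ t in π..(2*π), Real.sin t / (5 * Real.sin (t/5)))
      ≤ ∫ t in π..(2*π), Real.sin t / (c * Real.sin (t/c)) :=
    integral_mono_on (by linarith [pi_pos]) (my_ii3 (le_refl 5)) (my_ii3 hc) ptw2
  have h4π : (0:ℝ) ≤ 4 / π := by positivity
  have hmid : (4 / π) * (∫ t in (0 : ℝ)..π, Real.sin t / t) +
      (4 / π) * (∫ t in π..(2 * π), Real.sin t / (5 * Real.sin (t / 5))) ≤ Wq := by
    rw [hWq2, hsplit, mul_add]
    exact add_le_add (mul_le_mul_of_nonneg_left mono1 h4π)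
      (mul_le_mul_of_nonneg_left mono2 h4π)
  refine ⟨by rw [hWq2], hmid, ?_⟩
  have hfin : (1.7:ℝ) ≤ (4 / π) * (∫ t in (0 : ℝ)..π, Real.sin t / t) +
      (4 / π) * (∫ t in π..(2 * π), Real.sin t / (5 * Real.sin (t / 5))) := by
    rw [my_I2]
    have h1 := my_Si
    have h2 := my_num
    have hπ : (0:ℝ) < π := pi_pos
    have key : 1.7 * (π/4) ≤ (∫ t in (0 : ℝ)..π, Real.sin t / t)
        + (π/5 + Real.sin (π/5)/2 - 3/2 * Real.sin (2*π/5)) := by linarith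
    have := mul_le_mul_of_nonneg_left key h4π
    calc (1.7:ℝ) = (4/π) * (1.7 * (π/4)) := by field_simp
    _ ≤ (4/π) * ((∫ t in (0 : ℝ)..π, Real.sin t / t)
        + (π/5 + Real.sin (π/5)/2 - 3/2 * Real.sin (2*π/5))) := this
    _ = _ := by ring
  exact le_trans hfin hmid
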